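/- Let d ≥ 1, let Δ ⊆ ℝ^d be a reflexive polytope, and let Δ = Δ_1 + … + Δ_r be a nef partition: each Δ_i is a lattice polytope containing 0, and Δ_i ∩ Δ_j = {0} for i ≠ j. For each i let E_i be the set of extreme points e of Δ* with min_{x ∈ Δ_i} ⟨x, e⟩ = -1, and let ∇_i be the convex hull of E_i ∪ {0}. Define C_Δ = {(λ_1, …, λ_r, λ_1 x_1 + … + λ_r x_r) ∈ ℝ^r × ℝ^d : λ_i ≥ 0, x_i ∈ Δ_i for all i} and C_∇ = {(μ_1, …, μ_r, μ_1 y_1 + … + μ_r y_r) ∈ ℝ^r × ℝ^d : μ_i ≥ 0, y_i ∈ ∇_i for all i}. Then C_∇ equals the dual cone {(b, n) ∈ ℝ^r × ℝ^d : Σ_{i=1}^r a_i b_i + ⟨m, n⟩ ≥ 0 for all (a, m) ∈ C_Δ}. -/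

import Mathlib

open Pointwise

/-- The standard inner product on `ℝ^d`. -/
def dotp {d : ℕ} (x y : Fin d → ℝ) : ℝ := ∑ i, x i * y i

/-- A point of `ℝ^d` with integer coordinates (a lattice point of `ℤ^d`). -/
def IsLatticePt {d : ℕ} (x : Fin d → ℝ) : Prop := ∀ i, ∃ n : ℤ, x i = (n : ℝ)

/-- A lattice polytope: the convex hull of a finite set of lattice points. -/
def IsLatticePolytope {d : ℕ} (P : Set (Fin d → ℝ)) : Prop :=
  ∃ S : Finset (Fin d → ℝ), (∀ x ∈ S, IsLatticePt x) ∧ P = convexHull ℝ (S : Set (Fin d → ℝ))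

/-- The dual set `A* = {x : ⟨y,x⟩ ≥ -1 ∀ y ∈ A}`. -/
def dualSet {d : ℕ} (A : Set (Fin d → ℝ)) : Set (Fin d → ℝ) :=
  {x | ∀ y ∈ A, -1 ≤ dotp y x}

/-- A reflexive polytope: a lattice polytope with `0` in its interior whose dual is
also a lattice polytope. -/
def IsReflexivePolytope {d : ℕ} (P : Set (Fin d → ℝ)) : Prop :=
  IsLatticePolytope P ∧ (0 : Fin d → ℝ) ∈ interior P ∧ IsLatticePolytope (dualSet P)

/-- The minimum (infimum) of `⟨x, z⟩` over `x ∈ A`. -/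
noncomputable def minDot {d : ℕ} (A : Set (Fin d → ℝ)) (z : Fin d → ℝ) : ℝ :=
  sInf ((fun x => dotp x z) '' A)

/-- The Gorenstein cone `C_Δ ⊆ ℝ^r × ℝ^d` associated to polytopes `Δ_1, …, Δ_r`
(Definition 4.1): points `(λ_1, …, λ_r, λ_1 x_1 + ⋯ + λ_r x_r)` with `λ_i ≥ 0`,
`x_i ∈ Δ_i`. -/
def gorensteinCone {d r : ℕ} (D : Fin r → Set (Fin d → ℝ)) :
    Set ((Fin r → ℝ) × (Fin d → ℝ)) :=
  {p | ∃ (lam : Fin r → ℝ) (x : Fin r → Fin d → ℝ),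
      (∀ i, 0 ≤ lam i) ∧ (∀ i, x i ∈ D i) ∧ p = (lam, ∑ i, lam i • x i)}

/-- The extended pairing on `ℝ^r × ℝ^d`: `⟨(a,m),(b,n)⟩ = Σ a_i b_i + ⟨m,n⟩`. -/
def extPair {d r : ℕ} (p q : (Fin r → ℝ) × (Fin d → ℝ)) : ℝ :=
  (∑ i, p.1 i * q.1 i) + dotp p.2 q.2

section helpers
variable {d : ℕ}

lemma dotp_comm (x y : Fin d → ℝ) : dotp x y = dotp y x := by
  simp [dotp, mul_comm]

lemma isLinearMap_dotp (z : Fin d → ℝ) : IsLinearMap ℝ (fun x => dotp x z) := by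
  constructor
  · intro x y; simp [dotp, add_mul, Finset.sum_add_distrib]
  · intro c x; simp [dotp, Finset.mul_sum, mul_assoc]

lemma dotp_zero_left (z : Fin d → ℝ) : dotp 0 z = 0 := by simp [dotp]

lemma dotp_zero_right (z : Fin d → ℝ) : dotp z 0 = 0 := by simp [dotp]

lemma dotp_smul_left (c : ℝ) (x z : Fin d → ℝ) : dotp (c • x) z = c * dotp x z := by
  simpa using (isLinearMap_dotp z).map_smul c x

lemma dotp_smul_right (c : ℝ) (x z : Fin d → ℝ) : dotp x (c • z) = c * dotp x z := by
  rw [dotp_comm, dotp_smul_left, dotp_comm]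

lemma dotp_sum_left {ι : Type*} (s : Finset ι) (f : ι → Fin d → ℝ) (z : Fin d → ℝ) :
    dotp (∑ j ∈ s, f j) z = ∑ j ∈ s, dotp (f j) z := by
  simp only [dotp, Finset.sum_apply, Finset.sum_mul]
  exact Finset.sum_comm

lemma dotp_sum_right {ι : Type*} (s : Finset ι) (f : ι → Fin d → ℝ) (z : Fin d → ℝ) :
    dotp z (∑ j ∈ s, f j) = ∑ j ∈ s, dotp z (f j) := by
  rw [dotp_comm, dotp_sum_left]
  simp [dotp_comm]

lemma dotp_self_pos {z : Fin d → ℝ} (hz : z ≠ 0) : 0 < dotp z z := by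
  obtain ⟨k, hk⟩ := Function.ne_iff.mp hz
  have h1 : (0:ℝ) < z k * z k := mul_self_pos.2 hk
  exact lt_of_lt_of_le h1
    (Finset.single_le_sum (fun i _ => mul_self_nonneg (z i)) (Finset.mem_univ k))

lemma dotp_int {x y : Fin d → ℝ} (hx : IsLatticePt x) (hy : IsLatticePt y) :
    ∃ k : ℤ, dotp x y = (k : ℝ) := by
  choose nx hnx using hx
  choose ny hny using hy
  refine ⟨∑ i, nx i * ny i, ?_⟩
  rw [dotp]
  push_cast
  exact Finset.sum_congr rfl fun i _ => by rw [hnx i, hny i]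

lemma hull_le_dotp {S : Finset (Fin d → ℝ)} (hne : S.Nonempty) (z : Fin d → ℝ) {x : Fin d → ℝ}
    (hx : x ∈ convexHull ℝ (S : Set (Fin d → ℝ))) :
    S.inf' hne (fun v => dotp v z) ≤ dotp x z := by
  have h := convexHull_min (s := (S : Set (Fin d → ℝ)))
    (t := {w | S.inf' hne (fun v => dotp v z) ≤ dotp w z})
    (fun v hv => show S.inf' hne (fun v => dotp v z) ≤ dotp v z from
      Finset.inf'_le _ (by exact_mod_cast hv))
    (convex_halfSpace_ge (isLinearMap_dotp z) _)
  exact h hx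

lemma minDot_hull {S : Finset (Fin d → ℝ)} (hne : S.Nonempty) (z : Fin d → ℝ) :
    minDot (convexHull ℝ (S : Set (Fin d → ℝ))) z = S.inf' hne (fun v => dotp v z) := by
  apply le_antisymm
  · obtain ⟨v, hv, hveq⟩ := S.exists_mem_eq_inf' hne (fun v => dotp v z)
    refine csInf_le ⟨S.inf' hne (fun v => dotp v z), ?_⟩
      ⟨v, subset_convexHull ℝ _ hv, hveq.symm⟩
    rintro _ ⟨x, hx, rfl⟩
    exact hull_le_dotp hne z hx
  · refine le_csInf ⟨_, ⟨hne.choose, subset_convexHull ℝ _ hne.choose_spec, rfl⟩⟩ ?_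
    rintro _ ⟨x, hx, rfl⟩
    exact hull_le_dotp hne z hx

lemma minDot_le_dotp {S : Finset (Fin d → ℝ)} (hne : S.Nonempty) (z : Fin d → ℝ) {x : Fin d → ℝ}
    (hx : x ∈ convexHull ℝ (S : Set (Fin d → ℝ))) :
    minDot (convexHull ℝ (S : Set (Fin d → ℝ))) z ≤ dotp x z := by
  rw [minDot_hull hne]; exact hull_le_dotp hne z hx

lemma le_minDot {S : Finset (Fin d → ℝ)} (hne : S.Nonempty) (z : Fin d → ℝ) {c : ℝ}
    (h : ∀ v ∈ S, c ≤ dotp v z) :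
    c ≤ minDot (convexHull ℝ (S : Set (Fin d → ℝ))) z := by
  rw [minDot_hull hne]; exact Finset.le_inf' hne _ h

lemma minDot_attain {S : Finset (Fin d → ℝ)} (hne : S.Nonempty) (z : Fin d → ℝ) :
    ∃ v ∈ S, minDot (convexHull ℝ (S : Set (Fin d → ℝ))) z = dotp v z := by
  rw [minDot_hull hne]; exact S.exists_mem_eq_inf' hne _

lemma minDot_smul {S : Finset (Fin d → ℝ)} (hne : S.Nonempty) (z : Fin d → ℝ) {c : ℝ}
    (hc : 0 < c) :
    minDot (convexHull ℝ (S : Set (Fin d → ℝ))) (c • z)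
      = c * minDot (convexHull ℝ (S : Set (Fin d → ℝ))) z := by
  apply le_antisymm
  · obtain ⟨v, hv, hveq⟩ := minDot_attain hne z
    calc minDot (convexHull ℝ (S : Set (Fin d → ℝ))) (c • z) ≤ dotp v (c • z) :=
          minDot_le_dotp hne _ (subset_convexHull ℝ _ hv)
      _ = c * dotp v z := dotp_smul_right c v z
      _ = c * minDot (convexHull ℝ (S : Set (Fin d → ℝ))) z := by rw [hveq]
  · obtain ⟨v, hv, hveq⟩ := minDot_attain hne (c • z)
    rw [hveq, dotp_smul_right]
    have := minDot_le_dotp hne z (subset_convexHull ℝ (S : Set (Fin d → ℝ)) hv)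
    nlinarith
end helpers

/-- Remark 4.2, Batyrev–Borisov: the Gorenstein cone of the dual
nef partition is the dual cone of the Gorenstein cone of the nef partition. -/
theorem gorensteinCone_dual {d r : ℕ} (hd : 1 ≤ d)
    (Δ : Set (Fin d → ℝ)) (hΔ : IsReflexivePolytope Δ)
    (D : Fin r → Set (Fin d → ℝ)) (hlat : ∀ i, IsLatticePolytope (D i))
    (h0 : ∀ i, (0 : Fin d → ℝ) ∈ D i) (hsum : Δ = ∑ i, D i)
    (hnef : ∀ i j, i ≠ j → D i ∩ D j = {0})
    (E : Fin r → Set (Fin d → ℝ))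
    (hE : ∀ i, E i = {e ∈ Set.extremePoints ℝ (dualSet Δ) | minDot (D i) e = -1})
    (N : Fin r → Set (Fin d → ℝ))
    (hN : ∀ i, N i = convexHull ℝ (E i ∪ {0})) :
    gorensteinCone N
      = {q : (Fin r → ℝ) × (Fin d → ℝ) | ∀ p ∈ gorensteinCone D, 0 ≤ extPair p q} := by
  classical
  obtain ⟨hΔ1, hΔ2, SD, hSDlat, hSDeq⟩ := hΔ
  choose S hSlat hSeq using hlat
  have hSne : ∀ i, (S i).Nonempty := by
    intro i
    rw [← Finset.coe_nonempty]
    by_contra h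
    rw [Set.not_nonempty_iff_eq_empty] at h
    have := h0 i
    rw [hSeq i, h] at this
    simp at this
  have hSsub : ∀ i, (S i : Set (Fin d → ℝ)) ⊆ D i := by
    intro i
    rw [hSeq i]
    exact subset_convexHull ℝ _
  -- basic minDot facts for the D i
  have hm_le : ∀ i (z : Fin d → ℝ), ∀ x ∈ D i, minDot (D i) z ≤ dotp x z := by
    intro i z x hx
    rw [hSeq i] at hx ⊢
    exact minDot_le_dotp (hSne i) z hx
  have hm_lb : ∀ i (z : Fin d → ℝ) (c : ℝ), (∀ x ∈ D i, c ≤ dotp x z) → c ≤ minDot (D i) z := by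
    intro i z c h
    rw [hSeq i]
    exact le_minDot (hSne i) z (fun v hv => h v (hSsub i hv))
  have hm_att : ∀ i (z : Fin d → ℝ), ∃ v ∈ S i, minDot (D i) z = dotp v z := by
    intro i z
    rw [hSeq i]
    exact minDot_attain (hSne i) z
  have hm_smul : ∀ i (z : Fin d → ℝ) (c : ℝ), 0 < c →
      minDot (D i) (c • z) = c * minDot (D i) z := by
    intro i z c hc
    rw [hSeq i]
    exact minDot_smul (hSne i) z hc
  have hm_nonpos : ∀ i (z : Fin d → ℝ), minDot (D i) z ≤ 0 := by
    intro i z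
    have := hm_le i z 0 (h0 i)
    simpa [dotp_zero_left] using this
  -- membership in Δ
  have hΔmem : ∀ y : Fin d → ℝ, y ∈ Δ ↔
      ∃ g : Fin r → Fin d → ℝ, (∀ i, g i ∈ D i) ∧ ∑ i, g i = y := by
    intro y
    rw [hsum, Set.mem_fintype_sum]
    constructor
    · rintro ⟨g, hg, hgy⟩; exact ⟨g, hg, hgy⟩
    · rintro ⟨g, hg, hgy⟩; exact ⟨g, hg, hgy⟩
  -- lower bound for dotp on Δ from sum of minDots
  have hΔlb : ∀ (z : Fin d → ℝ) (c : ℝ), c ≤ ∑ i, minDot (D i) z →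
      ∀ y ∈ Δ, c ≤ dotp y z := by
    intro z c hc y hy
    obtain ⟨g, hg, rfl⟩ := (hΔmem y).mp hy
    rw [dotp_sum_left]
    exact le_trans hc (Finset.sum_le_sum fun i _ => hm_le i z (g i) (hg i))
  have hdual_iff : ∀ z : Fin d → ℝ, z ∈ dualSet Δ ↔ -1 ≤ ∑ i, minDot (D i) z := by
    intro z
    constructor
    · intro hz
      choose v hv hveq using fun i => hm_att i z
      have hx : (∑ i, v i) ∈ Δ := (hΔmem _).mpr ⟨v, fun i => hSsub i (hv i), rfl⟩
      have := hz _ hx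
      rw [dotp_sum_left] at this
      calc (-1 : ℝ) ≤ ∑ i, dotp (v i) z := this
        _ = ∑ i, minDot (D i) z := by
            exact Finset.sum_congr rfl fun i _ => (hveq i).symm
    · intro h y hy
      exact hΔlb z (-1) h y hy
  -- z = 0 when dotp is nonneg on Δ
  have hzero : ∀ z : Fin d → ℝ, (∀ y ∈ Δ, 0 ≤ dotp y z) → z = 0 := by
    intro z hz
    by_contra hzne
    rw [mem_interior_iff_mem_nhds, Metric.mem_nhds_iff] at hΔ2
    obtain ⟨ε, hε, hball⟩ := hΔ2
    have hznorm : 0 < ‖z‖ := norm_pos_iff.mpr hzne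
    set x : Fin d → ℝ := (-(ε / 2) / ‖z‖) • z with hxdef
    have hxball : x ∈ Metric.ball (0 : Fin d → ℝ) ε := by
      rw [Metric.mem_ball, dist_zero_right, hxdef, norm_smul]
      rw [Real.norm_eq_abs, abs_div, abs_neg, abs_of_pos (by linarith), abs_of_pos hznorm]
      rw [div_mul_cancel₀ _ (ne_of_gt hznorm)]
      linarith
    have h1 : 0 ≤ dotp x z := hz x (hball hxball)
    rw [hxdef, dotp_smul_left] at h1
    have h2 := dotp_self_pos hzne
    have h3 : (-(ε / 2) / ‖z‖) < 0 := by
      apply div_neg_of_neg_of_pos <;> linarith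
    nlinarith
  have hm_zero : ∀ j, minDot (D j) (0 : Fin d → ℝ) = 0 := by
    intro j
    refine le_antisymm (hm_nonpos j 0) (hm_lb j 0 0 ?_)
    intro x hx
    rw [dotp_zero_right]
  have h0dual : (0 : Fin d → ℝ) ∈ dualSet Δ := by
    intro y hy
    rw [dotp_zero_right]
    norm_num
  -- facts about E i
  have hEfact : ∀ i, ∀ e ∈ E i, e ∈ dualSet Δ ∧ minDot (D i) e = -1 ∧
      ∀ j, j ≠ i → minDot (D j) e = 0 := by
    intro i e he
    rw [hE i] at he
    obtain ⟨hext, hmi⟩ := he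
    have hedual : e ∈ dualSet Δ := extremePoints_subset hext
    refine ⟨hedual, hmi, ?_⟩
    have hs : -1 ≤ ∑ j, minDot (D j) e := (hdual_iff e).mp hedual
    have hsplit := Finset.add_sum_erase Finset.univ (fun j => minDot (D j) e) (Finset.mem_univ i)
    have hrest : 0 ≤ ∑ j ∈ Finset.univ.erase i, minDot (D j) e := by
      rw [hmi] at hsplit
      linarith
    have hnp : ∑ j ∈ Finset.univ.erase i, minDot (D j) e ≤ 0 :=
      Finset.sum_nonpos fun j _ => hm_nonpos j e
    have hzero' : ∑ j ∈ Finset.univ.erase i, minDot (D j) e = 0 := le_antisymm hnp hrest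
    intro j hj
    exact (Finset.sum_eq_zero_iff_of_nonpos fun k _ => hm_nonpos k e).mp hzero' j
      (Finset.mem_erase.mpr ⟨hj, Finset.mem_univ j⟩)
  -- every extreme point of the dual lies in some E i
  have hext_mem : ∀ e ∈ Set.extremePoints ℝ (dualSet Δ), ∃ i, e ∈ E i := by
    intro e he
    have hedual : e ∈ dualSet Δ := extremePoints_subset he
    have heSD : e ∈ (SD : Set (Fin d → ℝ)) := by
      have h' := he
      rw [hSDeq] at h'
      exact extremePoints_convexHull_subset h'
    have helat : IsLatticePt e := hSDlat e heSD
    obtain ⟨heA, hext2⟩ := he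
    have htot : ∑ j, minDot (D j) e = -1 := by
      have h1 : -1 ≤ ∑ j, minDot (D j) e := (hdual_iff e).mp hedual
      rcases eq_or_lt_of_le h1 with h | h
      · exact h.symm
      exfalso
      have hts : 0 ≤ -(∑ j, minDot (D j) e) := by
        have : ∑ j, minDot (D j) e ≤ 0 := Finset.sum_nonpos fun j _ => hm_nonpos j e
        linarith
      rcases eq_or_lt_of_le hts with ht | ht
      · -- total = 0 : e = 0, but 0 is not an extreme point
        have he0 : e = 0 := by
          apply hzero
          apply hΔlb e 0
          linarith
        subst he0
        set u₀ : Fin d → ℝ := Pi.single (⟨0, hd⟩ : Fin d) (1 : ℝ) with hu₀def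
        have hu₀ : u₀ ≠ 0 := by
          intro hc
          have h2 := congrFun hc ⟨0, hd⟩
          rw [hu₀def] at h2
          simp at h2
        have ha : ∑ j, minDot (D j) u₀ ≤ 0 := Finset.sum_nonpos fun j _ => hm_nonpos j u₀
        have hb : ∑ j, minDot (D j) (-u₀) ≤ 0 := Finset.sum_nonpos fun j _ => hm_nonpos j (-u₀)
        set a : ℝ := ∑ j, minDot (D j) u₀
        set b : ℝ := ∑ j, minDot (D j) (-u₀)
        have hcpos : (0:ℝ) < (1 - a - b)⁻¹ := by
          apply inv_pos.mpr; linarith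
        have hc1 : (1 - a - b)⁻¹ * (1 - a - b) = 1 := by
          apply inv_mul_cancel₀; intro hcc; rw [hcc] at hcpos; simp at hcpos
        have hsmulsum : ∀ w : Fin d → ℝ,
            ∑ j, minDot (D j) ((1 - a - b)⁻¹ • w) = (1 - a - b)⁻¹ * ∑ j, minDot (D j) w := by
          intro w
          rw [Finset.mul_sum]
          exact Finset.sum_congr rfl fun j _ => hm_smul j w _ hcpos
        have humem : (1 - a - b)⁻¹ • u₀ ∈ dualSet Δ := by
          rw [hdual_iff, hsmulsum]
          nlinarith
        have hnumem : (1 - a - b)⁻¹ • (-u₀) ∈ dualSet Δ := by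
          rw [hdual_iff, hsmulsum]
          nlinarith
        have hseg : (0 : Fin d → ℝ) ∈
            openSegment ℝ ((1 - a - b)⁻¹ • u₀) ((1 - a - b)⁻¹ • (-u₀)) := by
          refine ⟨1/2, 1/2, one_half_pos, one_half_pos, by norm_num, ?_⟩
          module
        have := (hext2 humem hnumem hseg)
        exact smul_ne_zero (ne_of_gt hcpos) hu₀ this
      · -- 0 < t < 1 : contradiction with extremality via scaling
        set t : ℝ := -(∑ j, minDot (D j) e) with htdef
        have hts : ∑ j, minDot (D j) e = -t := by rw [htdef]; ring
        have ht1 : t < 1 := by rw [htdef]; linarith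
        have hene : e ≠ 0 := by
          intro hc
          rw [hc] at hts
          have : ∑ j, minDot (D j) (0 : Fin d → ℝ) = 0 :=
            Finset.sum_eq_zero fun j _ => hm_zero j
          rw [this] at hts
          linarith
        have htinv : (0:ℝ) < t⁻¹ := inv_pos.mpr ht
        have he' : t⁻¹ • e ∈ dualSet Δ := by
          rw [hdual_iff]
          have : ∑ j, minDot (D j) (t⁻¹ • e) = t⁻¹ * ∑ j, minDot (D j) e := by
            rw [Finset.mul_sum]
            exact Finset.sum_congr rfl fun j _ => hm_smul j e _ htinv
          rw [this, hts]
          rw [mul_neg, inv_mul_cancel₀ (ne_of_gt ht)]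
        have hseg : e ∈ openSegment ℝ (t⁻¹ • e) 0 := by
          refine ⟨t, 1 - t, ht, by linarith, by ring, ?_⟩
          rw [smul_zero, add_zero, smul_smul, mul_inv_cancel₀ (ne_of_gt ht), one_smul]
        have heq := (hext2 he' h0dual hseg)
        have : (t⁻¹ - 1) • e = 0 := by
          rw [sub_smul, one_smul, heq, sub_self]
        rcases smul_eq_zero.mp this with h' | h'
        · have : t⁻¹ = 1 := by linarith [h']
          rw [inv_eq_one] at this
          linarith
        · exact hene h'
    have hint : ∀ j, ∃ k : ℤ, minDot (D j) e = (k : ℝ) := by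
      intro j
      obtain ⟨v, hv, hveq⟩ := hm_att j e
      rw [hveq]
      exact dotp_int (hSlat j v hv) helat
    have hlb1 : ∀ j, -1 ≤ minDot (D j) e := by
      intro j
      have hsplit := Finset.add_sum_erase Finset.univ (fun k => minDot (D k) e) (Finset.mem_univ j)
      have hnp : ∑ k ∈ Finset.univ.erase j, minDot (D k) e ≤ 0 :=
        Finset.sum_nonpos fun k _ => hm_nonpos k e
      rw [htot] at hsplit
      linarith
    have hcases : ∀ j, minDot (D j) e = -1 ∨ minDot (D j) e = 0 := by
      intro j
      obtain ⟨k, hk⟩ := hint j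
      have h1 := hlb1 j
      have h2 := hm_nonpos j e
      rw [hk] at h1 h2 ⊢
      have hk1 : (-1 : ℤ) ≤ k := by exact_mod_cast h1
      have hk2 : k ≤ 0 := by exact_mod_cast h2
      have : k = -1 ∨ k = 0 := by omega
      rcases this with h' | h' <;> [left; right] <;> rw [h'] <;> norm_num
    by_contra hno
    push_neg at hno
    have hall0 : ∀ j, minDot (D j) e = 0 := by
      intro j
      rcases hcases j with h' | h'
      · exfalso
        exact hno j (by rw [hE j]; exact ⟨⟨heA, hext2⟩, h'⟩)
      · exact h'
    rw [Finset.sum_eq_zero (fun j _ => hall0 j)] at htot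
    norm_num at htot
  -- Krein-Milman: the dual is the hull of its extreme points
  have hKM : dualSet Δ = convexHull ℝ (Set.extremePoints ℝ (dualSet Δ)) := by
    have hcomp : IsCompact (dualSet Δ) := by
      rw [hSDeq]
      exact SD.finite_toSet.isCompact_convexHull ℝ
    have hconv : Convex ℝ (dualSet Δ) := by
      rw [hSDeq]
      exact convex_convexHull ℝ _
    have hextsub : Set.extremePoints ℝ (dualSet Δ) ⊆ (SD : Set (Fin d → ℝ)) := by
      intro e he
      rw [hSDeq] at he
      exact extremePoints_convexHull_subset he
    have hextfin : (Set.extremePoints ℝ (dualSet Δ)).Finite :=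
      SD.finite_toSet.subset hextsub
    have hclosed : IsClosed (convexHull ℝ (Set.extremePoints ℝ (dualSet Δ))) :=
      hextfin.isClosed_convexHull ℝ
    have h' := closure_convexHull_extremePoints hcomp hconv
    rw [hclosed.closure_eq] at h'
    exact h'.symm
  -- the main equality
  apply Set.eq_of_subset_of_subset
  · -- easy direction: the nabla cone pairs nonnegatively with the Delta cone
    rintro q ⟨mu, y, hmu, hy, rfl⟩
    rintro p ⟨lam, x, hlam, hx, rfl⟩
    have hkey : ∀ i j, -(if i = j then (1:ℝ) else 0) ≤ dotp (x i) (y j) := by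
      intro i j
      have hsub : E j ∪ {0} ⊆ {w | -(if i = j then (1:ℝ) else 0) ≤ dotp w (x i)} := by
        rintro w (hw | hw)
        · obtain ⟨_, hmj, hother⟩ := hEfact j w hw
          have hle : minDot (D i) w ≤ dotp (x i) w := hm_le i w (x i) (hx i)
          rw [Set.mem_setOf_eq, dotp_comm]
          by_cases hij : i = j
          · subst hij
            rw [if_pos rfl]
            linarith [hmj, hle]
          · rw [if_neg hij]
            have h2 := hother i hij
            linarith
        · rw [Set.mem_singleton_iff] at hw
          subst hw
          rw [Set.mem_setOf_eq, dotp_zero_left]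
          split <;> norm_num
      have := convexHull_min hsub (convex_halfSpace_ge (isLinearMap_dotp (x i)) _)
      have hyj := hy j
      rw [hN j] at hyj
      have h5 : (-if i = j then (1:ℝ) else 0) ≤ dotp (y j) (x i) := this hyj
      rw [dotp_comm]
      exact h5
    rw [extPair]
    simp only
    rw [dotp_sum_left]
    have hexp : ∀ i, dotp (lam i • x i) (∑ j, mu j • y j)
        = ∑ j, lam i * (mu j * dotp (x i) (y j)) := by
      intro i
      rw [dotp_smul_left, dotp_sum_right, Finset.mul_sum]
      congr 1
      ext j
      rw [dotp_smul_right]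
    rw [Finset.sum_congr rfl fun i _ => hexp i]
    have hbound : ∀ i, ∑ j, lam i * (mu j * dotp (x i) (y j)) ≥ -(lam i * mu i) := by
      intro i
      have h1 : ∀ j, lam i * (mu j * (-(if i = j then (1:ℝ) else 0)))
          ≤ lam i * (mu j * dotp (x i) (y j)) := by
        intro j
        apply mul_le_mul_of_nonneg_left _ (hlam i)
        apply mul_le_mul_of_nonneg_left _ (hmu j)
        exact hkey i j
      calc -(lam i * mu i) = ∑ j, lam i * (mu j * (-(if i = j then (1:ℝ) else 0))) := by
            rw [Finset.sum_eq_single i]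
            · rw [if_pos rfl]; ring
            · intro j _ hji
              rw [if_neg (Ne.symm hji)]; ring
            · intro h; exact absurd (Finset.mem_univ i) h
        _ ≤ ∑ j, lam i * (mu j * dotp (x i) (y j)) := Finset.sum_le_sum fun j _ => h1 j
    have : -(∑ i, lam i * mu i) ≤ ∑ i, ∑ j, lam i * (mu j * dotp (x i) (y j)) := by
      rw [← Finset.sum_neg_distrib]
      exact Finset.sum_le_sum fun i _ => hbound i
    linarith
  · -- hard direction
    rintro ⟨b, n⟩ hq
    simp only [Set.mem_setOf_eq] at hq
    have hkey : ∀ i, ∀ x ∈ D i, 0 ≤ b i + dotp x n := by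
      intro i x hx
      have hxsum : (∑ k, (Pi.single i 1 : Fin r → ℝ) k • (if k = i then x else 0)) = x := by
        rw [Finset.sum_eq_single i]
        · simp
        · intro k _ hk
          simp [Pi.single_apply, hk]
        · intro h; exact absurd (Finset.mem_univ i) h
      have hp : ((Pi.single i 1 : Fin r → ℝ), x) ∈ gorensteinCone D := by
        refine ⟨Pi.single i 1, fun k => if k = i then x else 0, ?_, ?_, ?_⟩
        · intro k
          rcases eq_or_ne k i with h | h
          · subst h; simp
          · simp [Pi.single_apply, h]
        · intro k
          by_cases h : k = i
          · simp [h, hx]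
          · simp [h, h0 k]
        · rw [hxsum]
      have h1 := hq _ hp
      rw [extPair] at h1
      simp only at h1
      have h2 : (∑ k, (Pi.single i 1 : Fin r → ℝ) k * b k) = b i := by
        rw [Finset.sum_eq_single i]
        · simp
        · intro k _ hk
          simp [Pi.single_apply, hk]
        · intro h; exact absurd (Finset.mem_univ i) h
      rw [h2] at h1
      exact h1
    have hb : ∀ i, 0 ≤ b i := by
      intro i
      have := hkey i 0 (h0 i)
      rwa [dotp_zero_left, add_zero] at this
    have hmb : ∀ i, -(b i) ≤ minDot (D i) n := by
      intro i
      apply hm_lb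
      intro x hx
      have := hkey i x hx
      linarith
    rcases eq_or_lt_of_le (show (0:ℝ) ≤ -(∑ i, minDot (D i) n) from by
        have : ∑ i, minDot (D i) n ≤ 0 := Finset.sum_nonpos fun i _ => hm_nonpos i n
        linarith) with ht | ht
    · -- total minDot is zero : n = 0
      have hn0 : n = 0 := by
        apply hzero
        apply hΔlb n 0
        linarith
      subst hn0
      refine ⟨b, fun _ => 0, hb, ?_, ?_⟩
      · intro i
        rw [hN i]
        exact subset_convexHull ℝ _ (Or.inr rfl)
      · have : (∑ i, b i • (0 : Fin d → ℝ)) = 0 := by simp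
        rw [this]
    · -- positive total
      set t : ℝ := -(∑ i, minDot (D i) n) with htdef
      have hts : ∑ i, minDot (D i) n = -t := by rw [htdef]; ring
      have hn' : t⁻¹ • n ∈ dualSet Δ := by
        rw [hdual_iff]
        have : ∑ i, minDot (D i) (t⁻¹ • n) = t⁻¹ * ∑ i, minDot (D i) n := by
          rw [Finset.mul_sum]
          exact Finset.sum_congr rfl fun i _ => hm_smul i n _ (inv_pos.mpr ht)
        rw [this, hts, mul_neg, inv_mul_cancel₀ (ne_of_gt ht)]
      rw [hKM, convexHull_eq] at hn'
      obtain ⟨ι, tset, w, zf, hw0, hw1, hzf, hcm⟩ := hn'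
      have hn_eq : n = ∑ j ∈ tset, (t * w j) • zf j := by
        have h2 : tset.centerMass w zf = ∑ j ∈ tset, w j • zf j :=
          Finset.centerMass_eq_of_sum_1 _ _ hw1
        have h3 : t • (t⁻¹ • n) = n := by
          rw [smul_smul, mul_inv_cancel₀ (ne_of_gt ht), one_smul]
        rw [← h3, ← hcm, h2, Finset.smul_sum]
        exact Finset.sum_congr rfl fun j _ => smul_smul t (w j) (zf j)
      have hchoice : ∀ j : {j // j ∈ tset}, ∃ i, zf j ∈ E i :=
        fun j => hext_mem _ (hzf j j.2)
      choose F hF using hchoice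
      have hn_eq' : n = ∑ j ∈ tset.attach, (t * w (j:ι)) • zf (j:ι) := by
        rw [Finset.sum_attach tset (fun j => (t * w j) • zf j)]
        exact hn_eq
      set L : Fin r → ℝ :=
        fun i => ∑ j ∈ tset.attach.filter (fun j => F j = i), t * w (j:ι) with hLdef
      set u : Fin r → (Fin d → ℝ) :=
        fun i => ∑ j ∈ tset.attach.filter (fun j => F j = i), (t * w (j:ι)) • zf (j:ι)
        with hudef
      have htw0 : ∀ j ∈ tset.attach, 0 ≤ t * w (j:ι) :=
        fun j _ => mul_nonneg (le_of_lt ht) (hw0 j j.2)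
      have hL0 : ∀ i, 0 ≤ L i := by
        intro i
        apply Finset.sum_nonneg
        intro j hj
        exact htw0 j (Finset.mem_filter.mp hj).1
      have hLsum : ∑ i, L i = t := by
        rw [hLdef]
        calc ∑ i, ∑ j ∈ tset.attach.filter (fun j => F j = i), t * w (j:ι)
            = ∑ j ∈ tset.attach, t * w (j:ι) := Finset.sum_fiberwise _ F _
          _ = t * ∑ j ∈ tset.attach, w (j:ι) := by rw [Finset.mul_sum]
          _ = t * ∑ j ∈ tset, w j := by rw [Finset.sum_attach tset (fun j => w j)]
          _ = t := by rw [hw1, mul_one]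
      have husum : ∑ i, u i = n := by
        rw [hudef]
        calc ∑ i, ∑ j ∈ tset.attach.filter (fun j => F j = i), (t * w (j:ι)) • zf (j:ι)
            = ∑ j ∈ tset.attach, (t * w (j:ι)) • zf (j:ι) := Finset.sum_fiberwise _ F _
          _ = n := hn_eq'.symm
      have hmLb : ∀ i, -(L i) ≤ minDot (D i) n := by
        intro i
        obtain ⟨v, hv, hveq⟩ := hm_att i n
        have hvD : v ∈ D i := hSsub i hv
        rw [hveq]
        have hdv : dotp v n = ∑ j ∈ tset.attach, (t * w (j:ι)) * dotp v (zf (j:ι)) := by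
          rw [hn_eq', dotp_sum_right]
          exact Finset.sum_congr rfl fun j _ => dotp_smul_right _ _ _
        have hterm : ∀ j ∈ tset.attach,
            (t * w (j:ι)) * (if F j = i then (-1:ℝ) else 0)
              ≤ (t * w (j:ι)) * dotp v (zf (j:ι)) := by
          intro j hj
          apply mul_le_mul_of_nonneg_left _ (htw0 j hj)
          obtain ⟨_, hmFj, hother⟩ := hEfact (F j) (zf (j:ι)) (hF j)
          have hle := hm_le i (zf (j:ι)) v hvD
          by_cases hij : F j = i
          · rw [if_pos hij]
            rw [hij] at hmFj
            linarith
          · rw [if_neg hij]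
            have h2 := hother i (fun hc => hij hc.symm)
            linarith
        have hsum1 : ∑ j ∈ tset.attach, (t * w (j:ι)) * (if F j = i then (-1:ℝ) else 0)
            = -(L i) := by
          calc ∑ j ∈ tset.attach, (t * w (j:ι)) * (if F j = i then (-1:ℝ) else 0)
              = ∑ j ∈ tset.attach, (if F j = i then -(t * w (j:ι)) else 0) := by
                refine Finset.sum_congr rfl fun j _ => ?_
                split <;> ring
            _ = ∑ j ∈ tset.attach.filter (fun j => F j = i), -(t * w (j:ι)) :=
                (Finset.sum_filter _ _).symm
            _ = -(L i) := by rw [hLdef, Finset.sum_neg_distrib]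
        calc -(L i) = ∑ j ∈ tset.attach, (t * w (j:ι)) * (if F j = i then (-1:ℝ) else 0) :=
              hsum1.symm
          _ ≤ ∑ j ∈ tset.attach, (t * w (j:ι)) * dotp v (zf (j:ι)) :=
              Finset.sum_le_sum hterm
          _ = dotp v n := hdv.symm
      have htight : ∀ i, minDot (D i) n = -(L i) := by
        have hsum0 : ∑ i, (minDot (D i) n + L i) = 0 := by
          rw [Finset.sum_add_distrib, hLsum]
          linarith
        intro i
        have := (Finset.sum_eq_zero_iff_of_nonneg
          (fun j _ => by have := hmLb j; linarith)).mp hsum0 i (Finset.mem_univ i)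
        linarith
      have hLb : ∀ i, L i ≤ b i := by
        intro i
        have h1 := hmb i
        rw [htight i] at h1
        linarith
      set y : Fin r → (Fin d → ℝ) := fun i => if L i = 0 then 0 else (b i)⁻¹ • u i with hydef
      have hu0 : ∀ i, L i = 0 → u i = 0 := by
        intro i hLi
        apply Finset.sum_eq_zero
        intro j hj
        have h2 := (Finset.sum_eq_zero_iff_of_nonneg
          (fun k hk => htw0 k (Finset.mem_filter.mp hk).1)).mp hLi j hj
        rw [h2, zero_smul]
      have hyN : ∀ i, y i ∈ N i := by
        intro i
        rw [hydef]
        by_cases hLi : L i = 0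
        · simp only [if_pos hLi]
          rw [hN i]
          exact subset_convexHull ℝ _ (Or.inr rfl)
        · simp only [if_neg hLi]
          have hLpos : 0 < L i := lt_of_le_of_ne (hL0 i) (Ne.symm hLi)
          have hbpos : 0 < b i := lt_of_lt_of_le hLpos (hLb i)
          have hw0mem : (L i)⁻¹ • u i ∈ convexHull ℝ (E i) := by
            have hcm2 := Finset.centerMass_mem_convexHull
              (tset.attach.filter (fun j => F j = i))
              (w := fun j => t * w (j:ι))
              (fun j hj => htw0 j (Finset.mem_filter.mp hj).1)
              (by exact hLpos)
              (z := fun j => zf (j:ι))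
              (fun j hj => by
                have h3 := hF j
                rw [(Finset.mem_filter.mp hj).2] at h3
                exact h3)
            simp only [Finset.centerMass] at hcm2
            exact hcm2
          have hcomb := (convex_convexHull ℝ (E i ∪ {0}))
            (convexHull_mono Set.subset_union_left hw0mem)
            (subset_convexHull ℝ (E i ∪ {0}) (Or.inr rfl))
            (show (0:ℝ) ≤ L i / b i from div_nonneg (hL0 i) (le_of_lt hbpos))
            (show (0:ℝ) ≤ 1 - L i / b i from by
              rw [sub_nonneg, div_le_one hbpos]; exact hLb i)
            (by ring)
          rw [hN i]
          have heq2 : (L i / b i) • ((L i)⁻¹ • u i) + (1 - L i / b i) • (0 : Fin d → ℝ)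
              = (b i)⁻¹ • u i := by
            rw [smul_zero, add_zero, smul_smul]
            congr 1
            field_simp
          rw [← heq2]
          exact hcomb
      have hby : ∀ i, b i • y i = u i := by
        intro i
        rw [hydef]
        by_cases hLi : L i = 0
        · simp only [if_pos hLi, smul_zero]
          exact (hu0 i hLi).symm
        · simp only [if_neg hLi]
          have hLpos : 0 < L i := lt_of_le_of_ne (hL0 i) (Ne.symm hLi)
          have hbpos : 0 < b i := lt_of_lt_of_le hLpos (hLb i)
          rw [smul_smul, mul_inv_cancel₀ (ne_of_gt hbpos), one_smul]
      have hfinal : (∑ i, b i • y i) = n := by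
        rw [Finset.sum_congr rfl fun i _ => hby i]
        exact husum
      exact ⟨b, y, hb, hyN, by rw [hfinal]⟩
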